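/- The number of classical parking functions of length n is (n+1)^(n-1). -/
import Mathlib


open Finset

/-- classical parking function of length `n`. -/
def IsPF (n : ℕ) (a : Fin n → ℕ) : Prop :=
  ∃ σ : Equiv.Perm (Fin n), Monotone (a ∘ σ) ∧ ∀ i : Fin n, (a ∘ σ) i ≤ (i : ℕ)

lemma card_perm_filter {n : ℕ} (σ : Equiv.Perm (Fin n)) (p : Fin n → Prop) [DecidablePred p] :
    (univ.filter fun i => p (σ i)).card = (univ.filter p).card := by
  apply Finset.card_bij (fun i _ => σ i)
  · intro i hi; simpa using (mem_filter.mp hi).2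
  · intro i _ j _ h; exact σ.injective h
  · intro j hj; exact ⟨σ.symm j, by simpa using (mem_filter.mp hj).2, by simp⟩

lemma card_fin_le {n k : ℕ} (hk : k < n) :
    (univ.filter fun i : Fin n => (i : ℕ) ≤ k).card = k + 1 := by
  have himg : (univ.filter fun i : Fin n => (i : ℕ) ≤ k).image Fin.val = Finset.range (k + 1) := by
    ext j
    simp only [Finset.mem_image, mem_filter, mem_univ, true_and, Finset.mem_range,
      Nat.lt_succ_iff]
    constructor
    · rintro ⟨i, hi, rfl⟩; exact hi
    · intro hj; exact ⟨⟨j, by omega⟩, hj, rfl⟩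
  have := Finset.card_image_of_injective
    (univ.filter fun i : Fin n => (i : ℕ) ≤ k) (Fin.val_injective)
  rw [himg, Finset.card_range] at this
  omega

lemma isPF_iff {n : ℕ} (a : Fin n → ℕ) :
    IsPF n a ↔ ∀ k, k < n → k + 1 ≤ (univ.filter fun i => a i ≤ k).card := by
  constructor
  · rintro ⟨σ, hmono, hle⟩ k hk
    have h1 : (univ.filter fun i : Fin n => (i : ℕ) ≤ k) ⊆ univ.filter fun i => a (σ i) ≤ k := by
      intro i hi
      simp only [mem_filter, mem_univ, true_and] at hi ⊢
      exact le_trans (hle i) hi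
    calc k + 1 = (univ.filter fun i : Fin n => (i : ℕ) ≤ k).card := (card_fin_le hk).symm
      _ ≤ (univ.filter fun i => a (σ i) ≤ k).card := Finset.card_le_card h1
      _ = (univ.filter fun i => a i ≤ k).card := card_perm_filter σ (fun i => a i ≤ k)
  · intro h
    refine ⟨Tuple.sort a, Tuple.monotone_sort a, fun i => ?_⟩
    by_contra hlt
    push_neg at hlt
    have hsub : (univ.filter fun j => a (Tuple.sort a j) ≤ (i : ℕ)) ⊆
        (univ.filter fun j : Fin n => j < i) := by
      intro j hj
      simp only [mem_filter, mem_univ, true_and] at hj ⊢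
      by_contra hij
      push_neg at hij
      have hm := Tuple.monotone_sort a hij
      simp only [Function.comp_apply] at hm hlt
      have hji : (i : ℕ) ≤ (j : ℕ) := hij
      omega
    have h2 : (univ.filter fun j : Fin n => j < i).card = (i : ℕ) := by
      have : (univ.filter fun j : Fin n => j < i) = Finset.Iio i := by ext j; simp
      rw [this, Fin.card_Iio]
    have h3 := h i i.isLt
    rw [← card_perm_filter (Tuple.sort a) (fun j => a j ≤ (i : ℕ))] at h3
    have := Finset.card_le_card hsub
    omega

lemma cycle_lemma {m : ℕ} (hm : 0 < m) (w : ℕ → ℤ)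
    (hper : ∀ t, w (t + m) = w t)
    (hsum : ∑ j ∈ Finset.range m, w j = -1) :
    ∃! s, s < m ∧ ∀ k, 0 < k → k < m → 0 ≤ ∑ j ∈ Finset.range k, w (s + j) := by
  classical
  set S : ℕ → ℤ := fun t => ∑ j ∈ Finset.range t, w j with hS
  have hshift : ∀ t, S (t + m) = S t - 1 := by
    intro t
    induction t with
    | zero => simpa [hS] using hsum
    | succ t ih =>
      have h1 : S (t + 1 + m) = S (t + m) + w (t + m) := by
        have he : t + 1 + m = (t + m) + 1 := by ring
        rw [he]; simp [hS, Finset.sum_range_succ]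
      rw [h1, ih, hper]
      simp [hS, Finset.sum_range_succ]; ring
  have hpart : ∀ s k, ∑ j ∈ Finset.range k, w (s + j) = S (s + k) - S s := by
    intro s k
    rw [hS]
    simp only
    rw [← Finset.sum_Ico_eq_sub w (Nat.le_add_right s k), Finset.sum_Ico_eq_sum_range]
    simp
  obtain ⟨s1, hs1m, hs1min⟩ := Finset.exists_min_image (Finset.range m) S
    ⟨0, Finset.mem_range.mpr hm⟩
  have hP : ∃ t, t < m ∧ ∀ u, u < m → S t ≤ S u :=
    ⟨s1, Finset.mem_range.mp hs1m, fun u hu => hs1min u (Finset.mem_range.mpr hu)⟩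
  set s0 := Nat.find hP with hs0def
  obtain ⟨hs0m, hs0min⟩ := Nat.find_spec hP
  rw [← hs0def] at hs0m hs0min
  have hstrict : ∀ t, t < s0 → S s0 < S t := by
    intro t ht
    have h1 : S s0 ≤ S t := hs0min t (by omega)
    rcases lt_or_eq_of_le h1 with h | h
    · exact h
    · exact absurd ⟨by omega, fun u hu => h.symm.trans_le (hs0min u hu)⟩ (Nat.find_min hP (hs0def ▸ ht))
  have hgood0 : ∀ k, 0 < k → k < m → 0 ≤ ∑ j ∈ Finset.range k, w (s0 + j) := by
    intro k hk0 hkm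
    rw [hpart]
    rcases lt_or_ge (s0 + k) m with h | h
    · have := hs0min (s0 + k) h; omega
    · have ht' : s0 + k - m < s0 := by omega
      have he : S (s0 + k) = S (s0 + k - m) - 1 := by
        rw [← hshift]; congr 1; omega
      have h2 := hstrict (s0 + k - m) ht'
      omega
  have key : ∀ a b, a < m → b < m → a < b →
      (∀ k, 0 < k → k < m → 0 ≤ ∑ j ∈ Finset.range k, w (a + j)) →
      (∀ k, 0 < k → k < m → 0 ≤ ∑ j ∈ Finset.range k, w (b + j)) → False := by
    intro a b ham hbm hab hga hgb
    have h1 := hga (b - a) (by omega) (by omega)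
    have h2 := hgb (a + m - b) (by omega) (by omega)
    rw [hpart] at h1 h2
    have e1 : a + (b - a) = b := by omega
    have e2 : b + (a + m - b) = a + m := by omega
    rw [e1] at h1
    rw [e2, hshift] at h2
    omega
  refine ⟨s0, ⟨hs0m, hgood0⟩, ?_⟩
  rintro s ⟨hsm, hgood⟩
  by_contra hne
  rcases lt_or_gt_of_ne hne with h | h
  · exact key s s0 hsm hs0m h hgood hgood0
  · exact key s0 s hs0m hsm h hgood0 hgood

def Good (n : ℕ) (f : Fin n → ZMod (n + 1)) : Prop :=
  ∀ k, 0 < k → k < n + 1 → k ≤ (univ.filter fun i => (f i).val < k).card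

lemma fiber_sum {n : ℕ} (f : Fin n → ZMod (n + 1)) {k : ℕ} (hk : k ≤ n + 1) :
    ∑ j ∈ Finset.range k, (univ.filter fun i => f i = (j : ZMod (n + 1))).card
      = (univ.filter fun i => (f i).val < k).card := by
  classical
  rw [Finset.card_eq_sum_card_fiberwise (s := univ.filter fun i => (f i).val < k)
    (t := Finset.range k) (f := fun i => (f i).val)
    (fun x hx => Finset.mem_range.mpr (mem_filter.mp hx).2)]
  apply Finset.sum_congr rfl
  intro j hj
  have hjm : j < n + 1 := lt_of_lt_of_le (Finset.mem_range.mp hj) hk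
  congr 1
  rw [Finset.filter_filter]
  ext i
  simp only [mem_filter, mem_univ, true_and]
  constructor
  · rintro h
    rw [h, ZMod.val_cast_of_lt hjm]
    exact ⟨Finset.mem_range.mp hj, rfl⟩
  · rintro ⟨-, hv⟩
    rw [← hv]
    exact (ZMod.natCast_rightInverse (f i)).symm

lemma exists_unique_shift {n : ℕ} (f : Fin n → ZMod (n + 1)) :
    ∃! c : ZMod (n + 1), Good n (fun i => f i + c) := by
  classical
  set w : ℕ → ℤ :=
    fun t => ((univ.filter fun i => f i = (t : ZMod (n + 1))).card : ℤ) - 1 with hw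
  have hper : ∀ t, w (t + (n + 1)) = w t := by
    intro t
    have h0 : ((n : ZMod (n + 1)) + 1) = 0 := by
      have h := ZMod.natCast_self (n + 1)
      push_cast at h
      exact h
    have hcast : ((t + (n + 1) : ℕ) : ZMod (n + 1)) = (t : ZMod (n + 1)) := by
      push_cast
      rw [h0, add_zero]
    simp only [hw, hcast]
  have hcardm : (univ.filter fun i : Fin n => (f i).val < n + 1).card = n := by
    rw [Finset.filter_true_of_mem fun i _ => ZMod.val_lt (f i)]
    simp
  have hsum : ∑ j ∈ Finset.range (n + 1), w j = -1 := by
    simp only [hw, Finset.sum_sub_distrib, Finset.sum_const, Finset.card_range, nsmul_eq_mul,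
      mul_one]
    rw [← Nat.cast_sum, fiber_sum f (le_refl (n + 1)), hcardm]
    push_cast
    ring
  have hiff : ∀ (c : ZMod (n + 1)) (s : ℕ), (s : ZMod (n + 1)) = -c →
      (Good n (fun i => f i + c) ↔
        ∀ k, 0 < k → k < n + 1 → 0 ≤ ∑ j ∈ Finset.range k, w (s + j)) := by
    intro c s hs
    have hfib : ∀ j : ℕ, (univ.filter fun i => f i = ((s + j : ℕ) : ZMod (n + 1)))
        = (univ.filter fun i => f i + c = (j : ZMod (n + 1))) := by
      intro j
      ext i
      simp only [mem_filter, mem_univ, true_and]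
      constructor
      · intro h; rw [h]; push_cast; rw [hs]; ring
      · intro h
        have h2 : f i = (j : ZMod (n + 1)) - c := by rw [← h]; ring
        rw [h2]; push_cast; rw [hs]; ring
    have hkey : ∀ k, k ≤ n + 1 → ∑ j ∈ Finset.range k, w (s + j)
        = ((univ.filter fun i => (f i + c).val < k).card : ℤ) - k := by
      intro k hkm
      simp only [hw, Finset.sum_sub_distrib, Finset.sum_const, Finset.card_range, nsmul_eq_mul,
        mul_one]
      congr 1
      rw [← Nat.cast_sum, ← fiber_sum (fun i => f i + c) hkm]
      congr 1
      exact Finset.sum_congr rfl fun j _ => by rw [hfib j]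
    constructor
    · intro hg k hk0 hkm
      rw [hkey k hkm.le]
      have h3 : k ≤ (univ.filter fun i => (f i + c).val < k).card := hg k hk0 hkm
      omega
    · intro h k hk0 hkm
      have h2 := h k hk0 hkm
      rw [hkey k hkm.le] at h2
      show k ≤ (univ.filter fun i => (f i + c).val < k).card
      omega
  obtain ⟨s0, ⟨hs0m, hs0good⟩, huniq⟩ := cycle_lemma (Nat.succ_pos n) w hper hsum
  refine ⟨-(s0 : ZMod (n + 1)), ?_, ?_⟩
  · exact (hiff _ s0 (neg_neg _).symm).mpr hs0good
  · intro c hc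
    have hsm : (-c).val < n + 1 := ZMod.val_lt (-c)
    have hcast : (((-c).val : ℕ) : ZMod (n + 1)) = -c := ZMod.natCast_rightInverse (-c)
    have hgood := (hiff c (-c).val hcast).mp hc
    have heq := huniq (-c).val ⟨hsm, hgood⟩
    rw [heq] at hcast
    have := congrArg Neg.neg hcast
    simpa using this.symm

noncomputable def theShift {n : ℕ} (f : Fin n → ZMod (n + 1)) : ZMod (n + 1) :=
  (exists_unique_shift f).exists.choose

lemma theShift_spec {n : ℕ} (f : Fin n → ZMod (n + 1)) :
    Good n (fun i => f i + theShift f) :=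
  (exists_unique_shift f).exists.choose_spec

lemma theShift_unique {n : ℕ} (f : Fin n → ZMod (n + 1)) (c : ZMod (n + 1))
    (h : Good n (fun i => f i + c)) : c = theShift f := by
  obtain ⟨c0, _, hu⟩ := exists_unique_shift f
  rw [hu c h, hu (theShift f) (theShift_spec f)]

noncomputable def goodEquiv (n : ℕ) :
    (Fin n → ZMod (n + 1)) ≃ ZMod (n + 1) × {f : Fin n → ZMod (n + 1) // Good n f} where
  toFun f := (theShift f, ⟨fun i => f i + theShift f, theShift_spec f⟩)
  invFun p := fun i => p.2.1 i - p.1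
  left_inv f := by funext i; simp
  right_inv p := by
    obtain ⟨c, g, hg⟩ := p
    have he : (fun i => (fun i => g i - c) i + c) = g := by funext i; simp
    have h1 : theShift (fun i => g i - c) = c := by
      refine (theShift_unique _ c ?_).symm
      rw [he]
      exact hg
    simp only [h1, he]

lemma card_good (n : ℕ) :
    (n + 1) * Nat.card {f : Fin n → ZMod (n + 1) // Good n f} = (n + 1) ^ n := by
  have h := Nat.card_congr (goodEquiv n)
  rw [Nat.card_prod] at h
  have h1 : Nat.card (Fin n → ZMod (n + 1)) = (n + 1) ^ n := by
    simp [Nat.card_eq_fintype_card, ZMod.card]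
  have h2 : Nat.card (ZMod (n + 1)) = n + 1 := by
    simp [Nat.card_eq_fintype_card, ZMod.card]
  rw [h1, h2] at h
  exact h.symm

lemma good_val_lt {n : ℕ} {f : Fin n → ZMod (n + 1)} (hf : Good n f) (i : Fin n) :
    (f i).val < n := by
  have hn : 0 < n := i.pos
  have h := hf n hn (by omega)
  have hle : (univ.filter fun j => (f j).val < n).card ≤ n := by
    calc (univ.filter fun j => (f j).val < n).card ≤ (univ : Finset (Fin n)).card :=
          Finset.card_filter_le _ _
      _ = n := by simp
  have heq : (univ.filter fun j => (f j).val < n) = univ := by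
    apply Finset.eq_univ_of_card
    simp only [Fintype.card_fin]
    omega
  have : i ∈ univ.filter fun j => (f j).val < n := by rw [heq]; exact Finset.mem_univ i
  exact (Finset.mem_filter.mp this).2

noncomputable def pfEquiv (n : ℕ) :
    {a : Fin n → Fin n // IsPF n (fun i => (a i : ℕ))} ≃
      {f : Fin n → ZMod (n + 1) // Good n f} where
  toFun a := ⟨fun i => ((a.1 i : ℕ) : ZMod (n + 1)), by
    intro k hk0 hkm
    have hval : ∀ i, (((a.1 i : ℕ) : ZMod (n + 1))).val = (a.1 i : ℕ) := fun i =>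
      ZMod.val_cast_of_lt (by have := (a.1 i).isLt; omega)
    have h := (isPF_iff _).mp a.2 (k - 1) (by omega)
    have hfe : (univ.filter fun i => (((a.1 i : ℕ) : ZMod (n + 1))).val < k)
        = univ.filter fun i => (a.1 i : ℕ) ≤ k - 1 := by
      apply Finset.filter_congr
      intro i _
      rw [hval i]
      omega
    rw [hfe]
    omega⟩
  invFun f := ⟨fun i => ⟨(f.1 i).val, good_val_lt f.2 i⟩, by
    rw [isPF_iff]
    intro k hk
    have h := f.2 (k + 1) (by omega) (by omega)
    have hfe : (univ.filter fun i => ((⟨(f.1 i).val, good_val_lt f.2 i⟩ : Fin n) : ℕ) ≤ k)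
        = univ.filter fun i => (f.1 i).val < k + 1 := by
      apply Finset.filter_congr
      intro i _
      simp [Nat.lt_succ_iff]
    rw [hfe]
    omega⟩
  left_inv a := by
    apply Subtype.ext
    funext i
    apply Fin.ext
    simp only
    exact ZMod.val_cast_of_lt (by have := (a.1 i).isLt; omega)
  right_inv f := by
    apply Subtype.ext
    funext i
    exact ZMod.natCast_rightInverse (f.1 i)

theorem card_parking_functions (n : ℕ) :
    Nat.card {a : Fin n → Fin n // IsPF n (fun i => (a i : ℕ))} = (n + 1) ^ (n - 1) := by
  rcases n with _ | m
  · have h := card_good 0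
    have he := Nat.card_congr (pfEquiv 0)
    rw [← he] at h
    simpa using h
  · have he := Nat.card_congr (pfEquiv (m + 1))
    have h : (m + 1 + 1) * Nat.card {a : Fin (m + 1) → Fin (m + 1) //
        IsPF (m + 1) (fun i => (a i : ℕ))} = (m + 1 + 1) * (m + 1 + 1) ^ m := by
      rw [he, card_good (m + 1)]
      ring
    have h2 : Nat.card {a : Fin (m + 1) → Fin (m + 1) // IsPF (m + 1) (fun i => (a i : ℕ))}
        = (m + 1 + 1) ^ m := Nat.eq_of_mul_eq_mul_left (Nat.succ_pos (m + 1)) h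
    simpa using h2
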